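/- arXiv:2208.03501 — 7 statements merged into one kernel-verified Lean document; each statement's English description precedes it below -/
import Mathlib

section
/- Let A be a real symmetric positive definite n×n matrix and g a nonzero vector in ℝ^n that is not an eigenvector of A (i.e., g is not parallel to Ag). Then for every nonnegative integer j, (gᵀ A^j g)(gᵀ A^{j+2} g) > (gᵀ A^{j+1} g)². -/
open Matrix

private lemma herm_dot_symm {n : ℕ} {M : Matrix (Fin n) (Fin n) ℝ}
    (hM : M.IsHermitian) (x y : Fin n → ℝ) :
    x ⬝ᵥ M.mulVec y = M.mulVec x ⬝ᵥ y := by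
  have ht : Mᵀ = M := by
    ext i j
    simpa using congrFun (congrFun hM.eq i) j
  rw [dotProduct_mulVec, ← vecMul_transpose, ht]

private lemma pow_pos_dot {n : ℕ} {A : Matrix (Fin n) (Fin n) ℝ}
    (hA : A.PosDef) (j : ℕ) {x : Fin n → ℝ} (hx : x ≠ 0) :
    0 < x ⬝ᵥ (A ^ j).mulVec x := by
  have hAk : ∀ k : ℕ, ∀ y : Fin n → ℝ, y ≠ 0 → (A ^ k).mulVec y ≠ 0 := by
    intro k y hy
    have hu : IsUnit (A ^ k) := (hA.isUnit).pow k
    have := Matrix.mulVec_injective_iff_isUnit.mpr hu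
    intro h0
    exact hy (this (by simpa using h0))
  rcases Nat.even_or_odd j with ⟨k, hk⟩ | ⟨k, hk⟩
  · subst hk
    have h1 : A ^ (k + k) = (A ^ k) * (A ^ k) := by rw [pow_add]
    rw [h1, ← mulVec_mulVec, herm_dot_symm (hA.isHermitian.pow k)]
    have hne := hAk k x hx
    have h0 : (0:ℝ) ≤ (A ^ k).mulVec x ⬝ᵥ (A ^ k).mulVec x :=
      Finset.sum_nonneg fun i _ => mul_self_nonneg _
    exact lt_of_le_of_ne h0
      (fun h => hne ((dotProduct_self_eq_zero).mp h.symm))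
  · subst hk
    have h1 : A ^ (2 * k + 1) = (A ^ k) * (A * (A ^ k)) := by
      rw [← pow_succ', ← pow_add]
      congr 1
      ring
    rw [h1, ← mulVec_mulVec, herm_dot_symm (hA.isHermitian.pow k), ← mulVec_mulVec]
    have hx' := hAk k x hx
    simpa using hA.dotProduct_mulVec_pos (show (A ^ k).mulVec x ≠ 0 from hx')

theorem quadratic_form_power_cauchy_schwarz_strict
    {n : ℕ} (A : Matrix (Fin n) (Fin n) ℝ) (g : Fin n → ℝ)
    (hA : A.PosDef) (hg : g ≠ 0)
    (hpar : ¬ ∃ c : ℝ, A.mulVec g = c • g) :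
    ∀ j : ℕ,
      (g ⬝ᵥ (A ^ j).mulVec g) * (g ⬝ᵥ (A ^ (j + 2)).mulVec g) >
        (g ⬝ᵥ (A ^ (j + 1)).mulVec g) ^ 2 := by
  intro j
  set u := A.mulVec g with hu
  set M := A ^ j with hM
  have hMh : M.IsHermitian := hA.isHermitian.pow j
  -- rewrite the three quadratic forms
  have h1 : g ⬝ᵥ (A ^ (j + 1)).mulVec g = g ⬝ᵥ M.mulVec u := by
    rw [pow_succ, ← mulVec_mulVec]
  have h2 : g ⬝ᵥ (A ^ (j + 2)).mulVec g = u ⬝ᵥ M.mulVec u := by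
    have : A ^ (j + 2) = A * (M * A) := by
      rw [hM, ← mul_assoc, ← pow_succ', ← pow_succ]
    rw [this, ← mulVec_mulVec, herm_dot_symm hA.isHermitian, ← mulVec_mulVec]
  set a := u ⬝ᵥ M.mulVec u with ha
  set b := g ⬝ᵥ M.mulVec u with hb
  set c := g ⬝ᵥ M.mulVec g with hc
  have hu0 : u ≠ 0 := by
    intro h; exact hpar ⟨0, by simp [← hu, h]⟩
  have ha0 : 0 < a := by rw [ha, hM]; exact pow_pos_dot hA j hu0
  -- the vector a • g - b • u is nonzero
  have hw0 : a • g - b • u ≠ 0 := by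
    intro h
    have hgeq : a • g = b • u := by
      have := sub_eq_zero.mp h; exact this
    by_cases hb0 : b = 0
    · rw [hb0, zero_smul] at hgeq
      exact hg (by simpa [smul_eq_zero, ha0.ne'] using hgeq)
    · apply hpar
      refine ⟨a / b, ?_⟩
      have h2 : u = (b⁻¹ * a) • g := by
        rw [← smul_smul, hgeq, smul_smul, inv_mul_cancel₀ hb0, one_smul]
      rw [h2, mul_comm, ← div_eq_mul_inv]
  have hsym : u ⬝ᵥ M.mulVec g = b := by
    rw [hb, herm_dot_symm hMh, dotProduct_comm]
  have key : 0 < (a • g - b • u) ⬝ᵥ M.mulVec (a • g - b • u) := by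
    rw [hM]; exact pow_pos_dot hA j hw0
  have expand : (a • g - b • u) ⬝ᵥ M.mulVec (a • g - b • u)
      = a * a * c - 2 * a * b * b + b * b * a := by
    rw [mulVec_sub, mulVec_smul, mulVec_smul]
    simp only [sub_dotProduct, dotProduct_sub, smul_dotProduct, dotProduct_smul,
      smul_eq_mul, ← hc.symm]
    rw [hsym]
    rw [← hb, ← ha, ← hc]
    ring
  rw [expand] at key
  have : 0 < a * (a * c - b * b) := by nlinarith
  have hlt : b * b < a * c := by nlinarith
  rw [h1, h2]
  nlinarith [hlt]
end

section
/- Let A be a real symmetric positive definite matrix and g a nonzero vector not parallel to Ag. Define c_j = gᵀ A^j g for j = 0,...,4, and set φ₁ = c₁c₄ − c₂c₃, φ₂ = c₀c₄ − c₂², φ₃ = c₀c₃ − c₁c₂. Then φ₁ > 0, φ₂ > 0, and φ₃ > 0. -/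
open Matrix
open scoped MatrixOrder

private lemma dot_self_nonneg' {n : ℕ} (v : Fin n → ℝ) : 0 ≤ v ⬝ᵥ v :=
  Finset.sum_nonneg fun i _ => mul_self_nonneg (v i)

private lemma dot_self_pos' {n : ℕ} {v : Fin n → ℝ} (hv : v ≠ 0) : 0 < v ⬝ᵥ v :=
  lt_of_le_of_ne (dot_self_nonneg' v)
    (fun h => hv (dotProduct_self_eq_zero.mp h.symm))

private lemma cs_le' {n : ℕ} (u w : Fin n → ℝ) :
    (u ⬝ᵥ w) ^ 2 ≤ (u ⬝ᵥ u) * (w ⬝ᵥ w) := by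
  by_cases hw : w = 0
  · simp [hw]
  · have hp : 0 < w ⬝ᵥ w := dot_self_pos' hw
    have key : 0 ≤ ((w ⬝ᵥ w) • u - (u ⬝ᵥ w) • w) ⬝ᵥ ((w ⬝ᵥ w) • u - (u ⬝ᵥ w) • w) :=
      dot_self_nonneg' _
    have expand : ((w ⬝ᵥ w) • u - (u ⬝ᵥ w) • w) ⬝ᵥ ((w ⬝ᵥ w) • u - (u ⬝ᵥ w) • w) =
        (w ⬝ᵥ w) * ((w ⬝ᵥ w) * (u ⬝ᵥ u) - (u ⬝ᵥ w) ^ 2) := by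
      simp [sub_dotProduct, dotProduct_sub, smul_dotProduct,
        dotProduct_smul, dotProduct_comm w u, smul_eq_mul]
      ring
    rw [expand] at key
    nlinarith

private lemma cs_lt' {n : ℕ} (u w : Fin n → ℝ) (hw : w ≠ 0)
    (h : ∀ t : ℝ, u ≠ t • w) :
    (u ⬝ᵥ w) ^ 2 < (u ⬝ᵥ u) * (w ⬝ᵥ w) := by
  have hp : 0 < w ⬝ᵥ w := dot_self_pos' hw
  have hv : (w ⬝ᵥ w) • u - (u ⬝ᵥ w) • w ≠ 0 := by
    intro h0
    apply h ((u ⬝ᵥ w) / (w ⬝ᵥ w))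
    have : (w ⬝ᵥ w) • u = (u ⬝ᵥ w) • w := by
      rwa [sub_eq_zero] at h0
    funext i
    have := congrFun this i
    simp [smul_eq_mul, div_mul_eq_mul_div] at this ⊢
    field_simp
    linarith [this]
  have key : 0 < ((w ⬝ᵥ w) • u - (u ⬝ᵥ w) • w) ⬝ᵥ ((w ⬝ᵥ w) • u - (u ⬝ᵥ w) • w) :=
    dot_self_pos' hv
  have expand : ((w ⬝ᵥ w) • u - (u ⬝ᵥ w) • w) ⬝ᵥ ((w ⬝ᵥ w) • u - (u ⬝ᵥ w) • w) =
      (w ⬝ᵥ w) * ((w ⬝ᵥ w) * (u ⬝ᵥ u) - (u ⬝ᵥ w) ^ 2) := by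
    simp [sub_dotProduct, dotProduct_sub, smul_dotProduct,
      dotProduct_smul, dotProduct_comm w u, smul_eq_mul]
    ring
  rw [expand] at key
  nlinarith

theorem phi_positive
    {n : ℕ} (A : Matrix (Fin n) (Fin n) ℝ) (g : Fin n → ℝ)
    (hA : A.PosDef) (hg : g ≠ 0)
    (hpar : ¬ ∃ t : ℝ, A.mulVec g = t • g)
    (c : ℕ → ℝ) (hc : ∀ j, c j = g ⬝ᵥ (A ^ j).mulVec g) :
    0 < c 1 * c 4 - c 2 * c 3 ∧
    0 < c 0 * c 4 - c 2 ^ 2 ∧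
    0 < c 0 * c 3 - c 1 * c 2 := by
  set B := CFC.sqrt A with hBdef
  have hBB : B * B = A := CFC.sqrt_mul_sqrt_self A hA.posSemidef.nonneg
  have hBherm : B.IsHermitian := (CFC.sqrt_nonneg A).posSemidef.1
  have hBsymm : Bᵀ = B := hBherm
  have hBunit : IsUnit B := by
    have hdet : det A ≠ 0 := hA.det_pos.ne'
    rw [← hBB, det_mul] at hdet
    exact (Matrix.isUnit_iff_isUnit_det B).mpr (IsUnit.mk0 _ (fun h => hdet (by rw [h]; ring)))
  have hBinj : Function.Injective B.mulVec := Matrix.mulVec_injective_iff_isUnit.mpr hBunit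
  -- the vectors v k = B^k g
  set v : ℕ → Fin n → ℝ := fun k => (B ^ k).mulVec g with hv
  have hvsucc : ∀ k, v (k + 1) = B.mulVec (v k) := by
    intro k
    simp only [hv, pow_succ']
    rw [← Matrix.mulVec_mulVec]
  have hvne : ∀ k, v k ≠ 0 := by
    intro k
    induction k with
    | zero => simpa [hv] using hg
    | succ k ih =>
      rw [hvsucc k]
      intro h0
      exact ih (hBinj (by simpa using h0))
  -- dot products of the v's
  have hdot : ∀ i j : ℕ, v i ⬝ᵥ v j = g ⬝ᵥ (B ^ (i + j)).mulVec g := by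
    intro i j
    have hT : (B ^ i)ᵀ = B ^ i := by rw [transpose_pow, hBsymm]
    show (B ^ i *ᵥ g) ⬝ᵥ (B ^ j *ᵥ g) = g ⬝ᵥ B ^ (i + j) *ᵥ g
    rw [← hT, Matrix.mulVec_transpose, ← Matrix.dotProduct_mulVec,
      Matrix.mulVec_mulVec, ← pow_add]
  have hA2B : ∀ j : ℕ, A ^ j = B ^ (2 * j) := by
    intro j
    rw [← hBB, ← pow_two, ← pow_mul]
  have hcv : ∀ i j : ℕ, c ((i + j) / 2) = v i ⬝ᵥ v j → True := fun _ _ _ => trivial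
  have hcd : ∀ j : ℕ, c j = v j ⬝ᵥ v j := by
    intro j
    rw [hc j, hdot j j, hA2B j, two_mul]
  have hcpos : ∀ j : ℕ, 0 < c j := fun j => (hcd j) ▸ dot_self_pos' (hvne j)
  -- c 2 = v 1 ⬝ᵥ v 3 , c 1 = v 0 ⬝ᵥ v 2 , c 3 = v 2 ⬝ᵥ v 4
  have hc2 : c 2 = v 1 ⬝ᵥ v 3 := by rw [hc 2, hdot 1 3, hA2B 2]
  have hc1 : c 1 = v 0 ⬝ᵥ v 2 := by rw [hc 1, hdot 0 2, hA2B 1]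
  have hc3 : c 3 = v 2 ⬝ᵥ v 4 := by rw [hc 3, hdot 2 4, hA2B 3]
  -- strict Cauchy-Schwarz for v 1, v 3
  have hindep : ∀ t : ℝ, v 1 ≠ t • v 3 := by
    intro t h13
    have hAg : A.mulVec g = v 2 := by
      rw [hv]; simp only [← hBB, ← pow_two]
    have h02 : v 1 = B.mulVec (v 0) := hvsucc 0
    have h24 : v 3 = B.mulVec (v 2) := hvsucc 2
    -- from v1 = t • v3 : B (v0) = B (t • v2), so v0 = t • v2 i.e. g = t • A g
    have hg2 : v 0 = t • v 2 := by
      apply hBinj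
      show B *ᵥ v 0 = B *ᵥ (t • v 2)
      rw [Matrix.mulVec_smul, ← h24, ← h02, h13]
    have hg0 : g = t • A.mulVec g := by
      rw [hAg, ← hg2]; simp [hv]
    have ht : t ≠ 0 := by
      intro h0
      rw [h0, zero_smul] at hg0
      exact hg hg0
    apply hpar
    refine ⟨t⁻¹, ?_⟩
    funext i
    have := congrFun hg0 i
    simp only [Pi.smul_apply, smul_eq_mul] at this ⊢
    field_simp
    linarith [this]
  have key : (v 1 ⬝ᵥ v 3) ^ 2 < (v 1 ⬝ᵥ v 1) * (v 3 ⬝ᵥ v 3) :=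
    cs_lt' (v 1) (v 3) (hvne 3) hindep
  have key2 : (v 0 ⬝ᵥ v 2) ^ 2 ≤ (v 0 ⬝ᵥ v 0) * (v 2 ⬝ᵥ v 2) := cs_le' (v 0) (v 2)
  have key3 : (v 2 ⬝ᵥ v 4) ^ 2 ≤ (v 2 ⬝ᵥ v 2) * (v 4 ⬝ᵥ v 4) := cs_le' (v 2) (v 4)
  rw [← hc2, ← hcd 1, ← hcd 3] at key
  rw [← hc1, ← hcd 0, ← hcd 2] at key2
  rw [← hc3, ← hcd 2, ← hcd 4] at key3
  have h0 := hcpos 0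
  have h1 := hcpos 1
  have h2 := hcpos 2
  have h3 := hcpos 3
  have h4 := hcpos 4
  refine ⟨?_, ?_, ?_⟩
  · nlinarith [mul_pos h2 h3, mul_pos h1 h4]
  · nlinarith [mul_pos h0 h4, mul_pos h1 h3, mul_pos h2 h2]
  · nlinarith [mul_pos h0 h3, mul_pos h1 h2]
end

section
/- With c_j = gᵀ A^j g (j = 0,...,4), φ₁ = c₁c₄ − c₂c₃, φ₂ = c₀c₄ − c₂², φ₃ = c₀c₃ − c₁c₂, where A is symmetric positive definite and g is nonzero and not parallel to Ag, the discriminant satisfies φ₂² − 4φ₁φ₃ > 0; consequently the quadratic equation φ₁α² − φ₂α + φ₃ = 0 has two distinct real positive roots. -/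
open Matrix

set_option maxHeartbeats 1000000 in
theorem discriminant_positive_two_roots
    {n : ℕ} (A : Matrix (Fin n) (Fin n) ℝ) (g : Fin n → ℝ)
    (hA : A.PosDef) (hg : g ≠ 0)
    (hpar : ¬ ∃ t : ℝ, A.mulVec g = t • g)
    (c : ℕ → ℝ) (hc : ∀ j, c j = g ⬝ᵥ (A ^ j).mulVec g)
    (φ₁ φ₂ φ₃ : ℝ)
    (h1 : φ₁ = c 1 * c 4 - c 2 * c 3)
    (h2 : φ₂ = c 0 * c 4 - c 2 ^ 2)
    (h3 : φ₃ = c 0 * c 3 - c 1 * c 2) :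
    φ₂ ^ 2 - 4 * φ₁ * φ₃ > 0 ∧
    ∃ x y : ℝ, x ≠ y ∧ 0 < x ∧ 0 < y ∧
      φ₁ * x ^ 2 - φ₂ * x + φ₃ = 0 ∧
      φ₁ * y ^ 2 - φ₂ * y + φ₃ = 0 := by
  have dotpos : ∀ z : Fin n → ℝ, z ≠ 0 → 0 < z ⬝ᵥ z := by
    intro z hz
    have h0 : (0:ℝ) ≤ z ⬝ᵥ z := Finset.sum_nonneg fun i _ => mul_self_nonneg _
    rcases h0.lt_or_eq with h | h
    · exact h
    · exact absurd (dotProduct_self_eq_zero.mp h.symm) hz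
  have hApos : ∀ z : Fin n → ℝ, z ≠ 0 → 0 < z ⬝ᵥ A.mulVec z := by
    intro z hz
    simpa using hA.dotProduct_mulVec_pos hz
  have hsymm : Aᵀ = A := hA.1
  have hdotA : ∀ x y : Fin n → ℝ, A.mulVec x ⬝ᵥ y = x ⬝ᵥ A.mulVec y := by
    intro x y
    rw [Matrix.dotProduct_mulVec x A y, ← Matrix.mulVec_transpose, hsymm,
      dotProduct_comm]
  set u : Fin n → ℝ := A.mulVec g with hu
  set v : Fin n → ℝ := A.mulVec u with hv
  have e2 : (A ^ 2).mulVec g = v := by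
    rw [pow_two, ← Matrix.mulVec_mulVec, ← hu, ← hv]
  have e3 : (A ^ 3).mulVec g = A.mulVec v := by
    rw [pow_succ', ← Matrix.mulVec_mulVec, e2]
  have e4 : (A ^ 4).mulVec g = A.mulVec (A.mulVec v) := by
    rw [pow_succ', ← Matrix.mulVec_mulVec, e3]
  -- injectivity-like fact
  have hAinj : ∀ z : Fin n → ℝ, A.mulVec z = 0 → z = 0 := by
    intro z hz
    by_contra hz0
    have := hApos z hz0
    rw [hz] at this
    simp at this
  -- basic dot product identities
  have h00 : g ⬝ᵥ g = c 0 := by rw [hc 0]; simp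
  have h01 : g ⬝ᵥ u = c 1 := by rw [hc 1]; simp [hu]
  have h02 : g ⬝ᵥ v = c 2 := by rw [hc 2, e2]
  have h11 : u ⬝ᵥ u = c 2 := by
    rw [← h02, hu, hdotA]
  have h12 : u ⬝ᵥ v = c 3 := by
    rw [hc 3, e3, hu, hdotA]
  have h22 : v ⬝ᵥ v = c 4 := by
    rw [hc 4, e4, hv, hdotA, hu, hdotA]
  have h10 : u ⬝ᵥ g = c 1 := by rw [dotProduct_comm, h01]
  have h21 : v ⬝ᵥ u = c 3 := by rw [dotProduct_comm, h12]
  have h20 : v ⬝ᵥ g = c 2 := by rw [dotProduct_comm, h02]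
  -- nonvanishing
  have hu0 : u ≠ 0 := by
    intro h
    exact hpar ⟨0, by rw [h]; simp⟩
  -- positivity of moments
  have hc0 : 0 < c 0 := by rw [← h00]; exact dotpos g hg
  have hc1 : 0 < c 1 := by
    have := hApos g hg; rwa [← hu, h01] at this
  have hc2 : 0 < c 2 := by rw [← h11]; exact dotpos u hu0
  have hc3 : 0 < c 3 := by
    have := hApos u hu0; rwa [← hv, h12] at this
  -- non-parallel combinations
  have hcomb : ∀ a b : ℝ, b ≠ 0 → a • g - b • u ≠ 0 := by
    intro a b hb h
    apply hpar
    refine ⟨a / b, ?_⟩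
    have hab : a • g = b • u := sub_eq_zero.mp h
    funext i
    have h' := congrFun hab i
    simp only [Pi.smul_apply, smul_eq_mul] at h' ⊢
    field_simp
    linear_combination -h'
  have hpar2 : ¬ ∃ s : ℝ, v = s • u := by
    rintro ⟨s, hs⟩
    have hz : A.mulVec (u - s • g) = 0 := by
      rw [Matrix.mulVec_sub, Matrix.mulVec_smul, ← hu, ← hv, hs, sub_self]
    have husg : u = s • g := sub_eq_zero.mp (hAinj _ hz)
    exact hpar ⟨s, husg⟩
  have hcomb2 : ∀ a b : ℝ, b ≠ 0 → a • u - b • v ≠ 0 := by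
    intro a b hb h
    apply hpar2
    refine ⟨a / b, ?_⟩
    have hab : a • u = b • v := sub_eq_zero.mp h
    funext i
    have h' := congrFun hab i
    simp only [Pi.smul_apply, smul_eq_mul] at h' ⊢
    field_simp
    linear_combination -h'
  -- Gram determinants positive
  have hG0 : 0 < c 0 * c 2 - c 1 ^ 2 := by
    have hw : c 1 • g - c 0 • u ≠ 0 := hcomb _ _ hc0.ne'
    have hq := dotpos _ hw
    rw [sub_dotProduct, smul_dotProduct, smul_dotProduct,
      dotProduct_sub, dotProduct_sub, dotProduct_smul,
      dotProduct_smul, dotProduct_smul, dotProduct_smul] at hq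
    simp only [smul_eq_mul, h00, h01, h10, h11] at hq
    nlinarith [hq, hc0]
  have hG1 : 0 < c 1 * c 3 - c 2 ^ 2 := by
    have hw : c 2 • g - c 1 • u ≠ 0 := hcomb _ _ hc1.ne'
    have hq := hApos _ hw
    rw [Matrix.mulVec_sub, Matrix.mulVec_smul, Matrix.mulVec_smul, ← hu, ← hv] at hq
    rw [sub_dotProduct, smul_dotProduct, smul_dotProduct,
      dotProduct_sub, dotProduct_sub, dotProduct_smul,
      dotProduct_smul, dotProduct_smul, dotProduct_smul] at hq
    simp only [smul_eq_mul, h01, h02, h11, h12] at hq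
    nlinarith [hq, hc1]
  have hG2 : 0 < c 2 * c 4 - c 3 ^ 2 := by
    have hw : c 3 • u - c 2 • v ≠ 0 := hcomb2 _ _ hc2.ne'
    have hq := dotpos _ hw
    rw [sub_dotProduct, smul_dotProduct, smul_dotProduct,
      dotProduct_sub, dotProduct_sub, dotProduct_smul,
      dotProduct_smul, dotProduct_smul, dotProduct_smul] at hq
    simp only [smul_eq_mul, h11, h12, h21, h22] at hq
    nlinarith [hq, hc2]
  have hc4 : 0 < c 4 := by nlinarith [hG2, hc2, hc3]
  -- positivity of the φ's
  have hφ1 : 0 < φ₁ := by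
    rw [h1]
    have key : (c 2 ^ 2) * (c 3 ^ 2) < (c 1 * c 3) * (c 2 * c 4) := by
      apply mul_lt_mul'' (by nlinarith) (by nlinarith) (sq_nonneg _) (sq_nonneg _)
    nlinarith [key, mul_pos hc2 hc3]
  have hφ3 : 0 < φ₃ := by
    rw [h3]
    have key : (c 1 ^ 2) * (c 2 ^ 2) < (c 0 * c 2) * (c 1 * c 3) := by
      apply mul_lt_mul'' (by nlinarith) (by nlinarith) (sq_nonneg _) (sq_nonneg _)
    nlinarith [key, mul_pos hc1 hc2]
  have hφ2 : 0 < φ₂ := by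
    rw [h2]
    have k1 : (c 1 ^ 2) * (c 3 ^ 2) < (c 0 * c 2) * (c 2 * c 4) := by
      apply mul_lt_mul'' (by nlinarith) (by nlinarith) (sq_nonneg _) (sq_nonneg _)
    have k2 : (c 2 ^ 2) * (c 2 ^ 2) < (c 1 * c 3) * (c 1 * c 3) := by
      apply mul_lt_mul'' (by nlinarith) (by nlinarith) (sq_nonneg _) (sq_nonneg _)
    nlinarith [k1, k2, mul_pos hc2 hc2]
  -- discriminant
  have hid : (φ₂ ^ 2 - 4 * φ₁ * φ₃) * (c 2) ^ 2
      = (2 * φ₁ * c 1 - φ₂ * c 2) ^ 2 + 4 * φ₁ ^ 2 * (c 0 * c 2 - c 1 ^ 2) := by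
    subst h1 h2 h3; ring
  have hD : 0 < φ₂ ^ 2 - 4 * φ₁ * φ₃ := by
    have hpos : 0 < (φ₂ ^ 2 - 4 * φ₁ * φ₃) * (c 2) ^ 2 := by
      rw [hid]
      nlinarith [sq_nonneg (2 * φ₁ * c 1 - φ₂ * c 2), mul_pos (mul_pos hφ1 hφ1) hG0]
    nlinarith [hpos, mul_pos hc2 hc2]
  refine ⟨hD, ?_⟩
  -- the two roots
  set s : ℝ := Real.sqrt (φ₂ ^ 2 - 4 * φ₁ * φ₃) with hs
  have hs2 : s ^ 2 = φ₂ ^ 2 - 4 * φ₁ * φ₃ := Real.sq_sqrt hD.le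
  have hspos : 0 < s := Real.sqrt_pos.mpr hD
  have h2φ : (2 * φ₁) ≠ 0 := by positivity
  have hslt : s < φ₂ := by nlinarith [hs2, mul_pos hφ1 hφ3, hφ2, hspos]
  refine ⟨(φ₂ + s) / (2 * φ₁), (φ₂ - s) / (2 * φ₁), ?_, ?_, ?_, ?_, ?_⟩
  · intro h
    rw [div_eq_div_iff (by positivity) (by positivity)] at h
    have : φ₂ + s = φ₂ - s := by
      have h2 : 0 < 2 * φ₁ := by positivity
      exact mul_right_cancel₀ h2.ne' h
    linarith
  · apply div_pos (by linarith) (by positivity)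
  · apply div_pos (by linarith) (by positivity)
  · field_simp
    linear_combination hs2
  · field_simp
    linear_combination hs2
end

section
/- Short stepsize property: under the assumptions that A is symmetric positive definite and g ≠ 0 is not parallel to Ag, the smaller root α̃ = (φ₂ − √(φ₂² − 4φ₁φ₃))/(2φ₁) of φ₁α² − φ₂α + φ₃ = 0 satisfies α̃ < c₂/c₃, where c_j = gᵀ A^j g and φ₁ = c₁c₄ − c₂c₃, φ₂ = c₀c₄ − c₂², φ₃ = c₀c₃ − c₁c₂. -/
open Matrix

section tildeAux
variable {n : ℕ} {A : Matrix (Fin n) (Fin n) ℝ}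

lemma tilde_shiftDot (hA : A.PosDef) (u w : Fin n → ℝ) :
    (A *ᵥ u) ⬝ᵥ w = u ⬝ᵥ (A *ᵥ w) := by
  have hsym : Aᵀ = A := by
    rw [← conjTranspose_eq_transpose_of_trivial, hA.isHermitian.eq]
  rw [dotProduct_mulVec, ← mulVec_transpose, hsym]

lemma tilde_powPosDef (hA : A.PosDef) : ∀ j : ℕ, (A ^ j).PosDef := by
  have hinj : ∀ x : Fin n → ℝ, A *ᵥ x = 0 → x = 0 := by
    intro x hx
    have hdet : IsUnit A.det := isUnit_iff_ne_zero.mpr (ne_of_gt hA.det_pos)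
    have := congrArg (A⁻¹ *ᵥ ·) hx
    simpa [mulVec_mulVec, Matrix.nonsing_inv_mul A hdet] using this
  intro j
  induction j using Nat.strong_induction_on with
  | _ j ih =>
    match j with
    | 0 => simpa using Matrix.PosDef.one
    | 1 => simpa using hA
    | (k+2) =>
      have hk := ih k (by omega)
      refine Matrix.PosDef.of_dotProduct_mulVec_pos (hA.isHermitian.pow _) ?_
      intro x hx
      have hAx : A *ᵥ x ≠ 0 := fun h => hx (hinj x h)
      have key : (star x) ⬝ᵥ (A ^ (k+2)) *ᵥ x
          = (star (A *ᵥ x)) ⬝ᵥ (A ^ k) *ᵥ (A *ᵥ x) := by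
        have hpow : A ^ (k+2) = A * (A ^ k * A) := by
          rw [pow_succ, pow_succ', mul_assoc]
        rw [hpow, ← mulVec_mulVec, star_trivial, star_trivial,
          ← tilde_shiftDot hA x ((A ^ k * A) *ᵥ x), ← mulVec_mulVec]
      rw [key]
      exact hk.dotProduct_mulVec_pos hAx
end tildeAux

theorem tilde_alpha_short
    {n : ℕ} (A : Matrix (Fin n) (Fin n) ℝ) (g : Fin n → ℝ)
    (hA : A.PosDef) (hg : g ≠ 0)
    (hpar : ¬ ∃ t : ℝ, A.mulVec g = t • g)
    (c : ℕ → ℝ) (hc : ∀ j, c j = g ⬝ᵥ (A ^ j).mulVec g)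
    (φ₁ φ₂ φ₃ : ℝ)
    (h1 : φ₁ = c 1 * c 4 - c 2 * c 3)
    (h2 : φ₂ = c 0 * c 4 - c 2 ^ 2)
    (h3 : φ₃ = c 0 * c 3 - c 1 * c 2) :
    (φ₂ - Real.sqrt (φ₂ ^ 2 - 4 * φ₁ * φ₃)) / (2 * φ₁) < c 2 / c 3 := by
  have cpos : ∀ j, 0 < c j := by
    intro j
    rw [hc j]
    simpa [star_trivial] using (tilde_powPosDef hA j).dotProduct_mulVec_pos hg
  -- expansion of (g + t • A g)ᵀ A^j (g + t • A g)
  have e1 : ∀ j : ℕ, g ⬝ᵥ (A ^ j) *ᵥ (A *ᵥ g) = c (j+1) := by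
    intro j
    rw [mulVec_mulVec, ← pow_succ, hc (j+1)]
  have e2 : ∀ j : ℕ, (A *ᵥ g) ⬝ᵥ (A ^ j) *ᵥ g = c (j+1) := by
    intro j
    rw [tilde_shiftDot hA, mulVec_mulVec, ← pow_succ', hc (j+1)]
  have e3 : ∀ j : ℕ, (A *ᵥ g) ⬝ᵥ (A ^ j) *ᵥ (A *ᵥ g) = c (j+2) := by
    intro j
    have hp : A * A ^ j * A = A ^ (j+2) := by rw [pow_succ, pow_succ']
    rw [tilde_shiftDot hA, mulVec_mulVec, mulVec_mulVec, hp,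
      hc (j+2)]
  have quad : ∀ (j : ℕ) (t : ℝ),
      0 < c j + 2 * t * c (j+1) + t ^ 2 * c (j+2) := by
    intro j t
    have hv : g + t • (A *ᵥ g) ≠ 0 := by
      intro h0
      rcases eq_or_ne t 0 with ht | ht
      · rw [ht, zero_smul, add_zero] at h0
        exact hg h0
      · have h1' : t • (A *ᵥ g) = -g := eq_neg_of_add_eq_zero_right h0
        have h2' : A *ᵥ g = t⁻¹ • (-g) := by
          rw [← h1', smul_smul, inv_mul_cancel₀ ht, one_smul]
        exact hpar ⟨-t⁻¹, by rw [h2', smul_neg, neg_smul]⟩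
    have hpos := (tilde_powPosDef hA j).dotProduct_mulVec_pos hv
    rw [star_trivial] at hpos
    have expand : (g + t • (A *ᵥ g)) ⬝ᵥ (A ^ j) *ᵥ (g + t • (A *ᵥ g))
        = c j + 2 * t * c (j+1) + t ^ 2 * c (j+2) := by
      rw [mulVec_add, mulVec_smul, dotProduct_add, add_dotProduct,
        add_dotProduct, dotProduct_smul, smul_dotProduct, smul_dotProduct,
        dotProduct_smul, e1 j, e2 j, e3 j, ← hc j]
      push_cast [smul_eq_mul]
      ring
    rw [expand] at hpos
    exact hpos
  have cs : ∀ j : ℕ, c (j+1) ^ 2 < c j * c (j+2) := by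
    intro j
    have hq := cpos (j+2)
    have h := quad j (-(c (j+1)) / c (j+2))
    have e : c j + 2 * (-(c (j+1)) / c (j+2)) * c (j+1)
        + (-(c (j+1)) / c (j+2)) ^ 2 * c (j+2)
        = (c j * c (j+2) - c (j+1) ^ 2) / c (j+2) := by
      field_simp
      ring
    rw [e] at h
    have h2' := mul_pos hq h
    rw [mul_div_cancel₀ _ (ne_of_gt hq)] at h2'
    linarith
  have cs0 := cs 0
  have cs1 := cs 1
  have cs2 := cs 2
  have hφ1 : 0 < φ₁ := by
    rw [h1]
    nlinarith [cs1, cs2, cpos 1, cpos 2, cpos 3, cpos 4,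
      mul_pos (cpos 2) (cpos 3)]
  have hφ3 : 0 < φ₃ := by
    rw [h3]
    nlinarith [cs0, cs1, cpos 0, cpos 1, cpos 2, cpos 3,
      mul_pos (cpos 1) (cpos 2)]
  set r : ℝ := c 2 / c 3 with hr
  have hc3 := cpos 3
  have hQ : φ₁ * r ^ 2 - φ₂ * r + φ₃ < 0 := by
    have key : φ₁ * r ^ 2 - φ₂ * r + φ₃
        = (c 1 * c 2 - c 0 * c 3) * (c 2 * c 4 - c 3 ^ 2) / c 3 ^ 2 := by
      rw [hr, h1, h2, h3]
      field_simp
      ring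
    rw [key]
    apply div_neg_of_neg_of_pos
    · apply mul_neg_of_neg_of_pos
      · linarith [hφ3, h3.symm.le]
      · linarith [cs2]
    · positivity
  have hD : (φ₂ - 2 * φ₁ * r) ^ 2 < φ₂ ^ 2 - 4 * φ₁ * φ₃ := by
    nlinarith [mul_pos hφ1 (show (0:ℝ) < -(φ₁ * r ^ 2 - φ₂ * r + φ₃) by linarith)]
  have hsq : φ₂ - 2 * φ₁ * r < Real.sqrt (φ₂ ^ 2 - 4 * φ₁ * φ₃) := by
    calc φ₂ - 2 * φ₁ * r ≤ |φ₂ - 2 * φ₁ * r| := le_abs_self _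
    _ = Real.sqrt ((φ₂ - 2 * φ₁ * r) ^ 2) := (Real.sqrt_sq_eq_abs _).symm
    _ < Real.sqrt (φ₂ ^ 2 - 4 * φ₁ * φ₃) := Real.sqrt_lt_sqrt (sq_nonneg _) hD
  rw [div_lt_iff₀ (by positivity : (0:ℝ) < 2 * φ₁)]
  linarith
end

section
/- Boundedness of the new stepsize: under the assumptions of the previous statement, the smaller root α̃ of φ₁α² − φ₂α + φ₃ = 0 satisfies 1/λ_n ≤ α̃ ≤ 1/λ₁, where λ₁ and λ_n are the smallest and largest eigenvalues of A. -/
set_option maxHeartbeats 1000000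

open Matrix

lemma sym_dot {n : ℕ} {M : Matrix (Fin n) (Fin n) ℝ} (hM : Mᵀ = M)
    (a b : Fin n → ℝ) : (M *ᵥ a) ⬝ᵥ b = a ⬝ᵥ (M *ᵥ b) := by
  rw [dotProduct_mulVec, ← mulVec_transpose, hM, dotProduct_comm]

/-- Cauchy–Schwarz for a positive semidefinite quadratic form. -/
lemma cs_aux {n : ℕ} {M : Matrix (Fin n) (Fin n) ℝ} (hM : Mᵀ = M)
    (hpos : ∀ z : Fin n → ℝ, 0 ≤ z ⬝ᵥ (M *ᵥ z)) (x y : Fin n → ℝ) :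
    (x ⬝ᵥ (M *ᵥ y)) ^ 2 ≤ (x ⬝ᵥ (M *ᵥ x)) * (y ⬝ᵥ (M *ᵥ y)) := by
  have hyx : y ⬝ᵥ (M *ᵥ x) = x ⬝ᵥ (M *ᵥ y) := by
    rw [← sym_dot hM y x, dotProduct_comm]
  have key : ∀ t : ℝ, 0 ≤ (y ⬝ᵥ (M *ᵥ y)) * (t * t) + (2 * (x ⬝ᵥ (M *ᵥ y))) * t
      + (x ⬝ᵥ (M *ᵥ x)) := by
    intro t
    have h := hpos (x + t • y)
    simp only [mulVec_add, mulVec_smul, dotProduct_add, add_dotProduct, dotProduct_smul,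
      smul_dotProduct, smul_eq_mul] at h
    rw [hyx] at h
    nlinarith [h]
  have hd := discrim_le_zero key
  rw [discrim] at hd
  nlinarith [hd]

lemma ker_aux {n : ℕ} {M : Matrix (Fin n) (Fin n) ℝ} (hM : Mᵀ = M)
    (hpos : ∀ z : Fin n → ℝ, 0 ≤ z ⬝ᵥ (M *ᵥ z)) (z : Fin n → ℝ)
    (hz : z ⬝ᵥ (M *ᵥ z) = 0) : M *ᵥ z = 0 := by
  have h := cs_aux hM hpos (M *ᵥ z) z
  rw [hz, mul_zero] at h
  have h2 : (M *ᵥ z) ⬝ᵥ (M *ᵥ z) = 0 := by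
    have := sq_nonneg ((M *ᵥ z) ⬝ᵥ (M *ᵥ z))
    nlinarith [h, this]
  exact dotProduct_self_eq_zero.mp h2

lemma e_ineq (e0 e1 e2 e3 : ℝ) (h0 : 0 ≤ e0) (h1 : 0 ≤ e1) (h2 : 0 ≤ e2) (h3 : 0 ≤ e3)
    (hA : e1 ^ 2 ≤ e0 * e2) (hB : e2 ^ 2 ≤ e1 * e3) : e1 * e2 ≤ e0 * e3 := by
  have hprod := mul_le_mul hA hB (sq_nonneg _) (mul_nonneg h0 h2)
  rcases (mul_nonneg h1 h2).lt_or_eq with hlt | heq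
  · nlinarith [hprod, hlt]
  · nlinarith [mul_nonneg h0 h3, heq]

lemma chain_lt (c1 c2 c3 c4 : ℝ) (hp2 : 0 < c2) (hp3 : 0 < c3)
    (hA : c2 ^ 2 ≤ c1 * c3) (hB : c3 ^ 2 < c2 * c4) : c2 * c3 < c1 * c4 := by
  have h24 : (0:ℝ) ≤ c2 * c4 := le_of_lt (lt_of_le_of_lt (sq_nonneg c3) hB)
  nlinarith [mul_lt_mul_of_pos_left hB (by positivity : (0:ℝ) < c2 ^ 2),
    mul_le_mul_of_nonneg_right hA h24, mul_pos hp2 hp3]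

lemma chain_le (c0 c1 c2 c3 : ℝ) (hp1 : 0 < c1) (hp2 : 0 < c2)
    (hA : c1 ^ 2 ≤ c0 * c2) (hB : c2 ^ 2 ≤ c1 * c3) : c1 * c2 ≤ c0 * c3 := by
  have h02 : (0:ℝ) ≤ c0 * c2 := le_trans (sq_nonneg c1) hA
  nlinarith [mul_le_mul hA hB (sq_nonneg c2) h02, mul_pos hp1 hp2]

lemma endgame (lam1 lamn p r φ₁ φ₂ φ₃ : ℝ)
    (hlam1 : 0 < lam1) (hlamn : 0 < lamn) (hp : 0 < p) (hr : 0 < r)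
    (hφ1 : 0 < φ₁)
    (hqstar : φ₁ * p ^ 2 - φ₂ * (p * r) + φ₃ * r ^ 2 ≤ 0)
    (hQ : 0 ≤ φ₁ - φ₂ * lamn + φ₃ * lamn ^ 2)
    (he2s : 0 < lamn * p - r)
    (hlow : lam1 * p ≤ r) :
    1 / lamn ≤ (φ₂ - Real.sqrt (φ₂ ^ 2 - 4 * φ₁ * φ₃)) / (2 * φ₁) ∧
    (φ₂ - Real.sqrt (φ₂ ^ 2 - 4 * φ₁ * φ₃)) / (2 * φ₁) ≤ 1 / lam1 := by
  set S := Real.sqrt (φ₂ ^ 2 - 4 * φ₁ * φ₃) with hSdef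
  have hu : (2 * φ₁ * p - φ₂ * r) ^ 2 ≤ (φ₂ ^ 2 - 4 * φ₁ * φ₃) * r ^ 2 := by
    nlinarith [mul_nonneg hφ1.le (neg_nonneg.2 hqstar)]
  have hD : 0 ≤ φ₂ ^ 2 - 4 * φ₁ * φ₃ := by
    nlinarith [hu, sq_nonneg (2 * φ₁ * p - φ₂ * r), mul_pos hr hr]
  have hSsq : S ^ 2 = φ₂ ^ 2 - 4 * φ₁ * φ₃ := Real.sq_sqrt hD
  have hSnn : 0 ≤ S := Real.sqrt_nonneg _
  have hSr1 : 2 * φ₁ * p - φ₂ * r ≤ S * r := by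
    nlinarith [hu, hSsq, mul_nonneg hSnn hr.le]
  have hSr2 : -(S * r) ≤ 2 * φ₁ * p - φ₂ * r := by
    nlinarith [hu, hSsq, mul_nonneg hSnn hr.le]
  have hDw : (φ₂ ^ 2 - 4 * φ₁ * φ₃) * lamn ^ 2 ≤ (φ₂ * lamn - 2 * φ₁) ^ 2 := by
    nlinarith [mul_nonneg hφ1.le hQ]
  have hw : 0 ≤ φ₂ * lamn - 2 * φ₁ := by
    by_contra hcon
    push_neg at hcon
    have hSl : S * lamn ≤ -(φ₂ * lamn - 2 * φ₁) := by
      nlinarith [hDw, hSsq, mul_nonneg hSnn hlamn.le]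
    rcases le_or_gt (S + φ₂) 0 with hsp | hsp
    · nlinarith [hSr1, hp, hr, hφ1, mul_nonpos_of_nonpos_of_nonneg hsp hr.le]
    · nlinarith [hSr1, he2s, hp, hφ1, hlamn, hSl, mul_pos hsp he2s]
  have hSw : S * lamn ≤ φ₂ * lamn - 2 * φ₁ := by
    nlinarith [hDw, hSsq, mul_nonneg hSnn hlamn.le, hw]
  constructor
  · rw [div_le_div_iff₀ hlamn (by linarith : (0:ℝ) < 2 * φ₁)]
    nlinarith [hSw]
  · rw [div_le_div_iff₀ (by linarith : (0:ℝ) < 2 * φ₁) hlam1]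
    rcases le_or_gt (φ₂ - S) 0 with hns | hns
    · nlinarith [hφ1, mul_nonpos_of_nonpos_of_nonneg hns hlam1.le]
    · nlinarith [hSr2, hlow, hp, hr, hφ1, hns, hlam1,
        mul_le_mul_of_nonneg_left hlow hns.le]

theorem tilde_alpha_bounds
    {n : ℕ} (A : Matrix (Fin n) (Fin n) ℝ) (g : Fin n → ℝ)
    (hA : A.PosDef) (hg : g ≠ 0)
    (hpar : ¬ ∃ t : ℝ, A.mulVec g = t • g)
    (lam1 lamn : ℝ) (hlam1 : 0 < lam1)
    (hbound : ∀ v : Fin n → ℝ,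
      lam1 * (v ⬝ᵥ v) ≤ v ⬝ᵥ A.mulVec v ∧ v ⬝ᵥ A.mulVec v ≤ lamn * (v ⬝ᵥ v))
    (c : ℕ → ℝ) (hc : ∀ j, c j = g ⬝ᵥ (A ^ j).mulVec g)
    (φ₁ φ₂ φ₃ : ℝ)
    (h1 : φ₁ = c 1 * c 4 - c 2 * c 3)
    (h2 : φ₂ = c 0 * c 4 - c 2 ^ 2)
    (h3 : φ₃ = c 0 * c 3 - c 1 * c 2) :
    1 / lamn ≤ (φ₂ - Real.sqrt (φ₂ ^ 2 - 4 * φ₁ * φ₃)) / (2 * φ₁) ∧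
    (φ₂ - Real.sqrt (φ₂ ^ 2 - 4 * φ₁ * φ₃)) / (2 * φ₁) ≤ 1 / lam1 := by
  -- basic symmetry and positivity facts
  have hAsym : Aᵀ = A := by
    have h := hA.1
    ext i j
    have := congrFun (congrFun h i) j
    simpa [conjTranspose_apply] using this
  have hstar : ∀ z : Fin n → ℝ, star z = z := fun z => by ext i; simp
  have hApos : ∀ z : Fin n → ℝ, z ≠ 0 → 0 < z ⬝ᵥ (A *ᵥ z) := by
    intro z hz
    have := hA.dotProduct_mulVec_pos hz
    rwa [hstar] at this
  have hAinj : ∀ z : Fin n → ℝ, A *ᵥ z = 0 → z = 0 := by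
    intro z hz
    by_contra h
    have := hApos z h
    rw [hz] at this
    simp at this
  open scoped MatrixOrder in
  obtain ⟨B, hBsym, hB2⟩ : ∃ B : Matrix (Fin n) (Fin n) ℝ, Bᵀ = B ∧ B * B = A := by
    refine ⟨CFC.sqrt A, ?_, CFC.sqrt_mul_sqrt_self A hA.posSemidef.nonneg⟩
    have h := (CFC.sqrt_nonneg A).posSemidef.1
    ext i j
    have := congrFun (congrFun h i) j
    simpa [conjTranspose_apply] using this
  have hAB : A * B = B * A := by rw [← hB2, mul_assoc]
  set v : Fin n → ℝ := A *ᵥ g with hv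
  set x : Fin n → ℝ := B *ᵥ g with hx
  set y : Fin n → ℝ := B *ᵥ v with hy
  have hsA := sym_dot hAsym
  have hsB := sym_dot hBsym
  have T2 : ∀ a : Fin n → ℝ, B *ᵥ (B *ᵥ a) = A *ᵥ a := by
    intro a; rw [mulVec_mulVec, hB2]
  have T3 : ∀ a : Fin n → ℝ, A *ᵥ (B *ᵥ a) = B *ᵥ (A *ᵥ a) := by
    intro a; rw [mulVec_mulVec, mulVec_mulVec, hAB]
  -- c identities
  have hc0 : c 0 = g ⬝ᵥ g := by rw [hc]; simp
  have hc1 : c 1 = g ⬝ᵥ v := by rw [hc]; simp [hv]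
  have hc2 : c 2 = g ⬝ᵥ (A *ᵥ v) := by
    rw [hc, show (A : Matrix (Fin n) (Fin n) ℝ) ^ 2 = A * A from sq A, ← mulVec_mulVec]
  have hc3 : c 3 = g ⬝ᵥ (A *ᵥ (A *ᵥ v)) := by
    rw [hc, show (A : Matrix (Fin n) (Fin n) ℝ) ^ 3 = A * (A * A) from by
      simp [pow_succ, mul_assoc], ← mulVec_mulVec, ← mulVec_mulVec]
  have hc4 : c 4 = g ⬝ᵥ (A *ᵥ (A *ᵥ (A *ᵥ v))) := by
    rw [hc, show (A : Matrix (Fin n) (Fin n) ℝ) ^ 4 = A * (A * (A * A)) from by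
      simp [pow_succ, mul_assoc], ← mulVec_mulVec, ← mulVec_mulVec, ← mulVec_mulVec]
  have hc4e : c 4 = v ⬝ᵥ (A *ᵥ (A *ᵥ v)) := by rw [hc4, ← hsA, ← hv]
  have E1 : v ⬝ᵥ v = c 2 := by rw [hc2, hv, hsA]
  have E2 : v ⬝ᵥ (A *ᵥ v) = c 3 := by rw [hc3, hv, hsA]
  have E3 : (A *ᵥ v) ⬝ᵥ (A *ᵥ v) = c 4 := by rw [hc4e, hsA]
  have E4 : x ⬝ᵥ x = c 1 := by rw [hc1, hx, hsB, T2]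
  have E5 : x ⬝ᵥ (A *ᵥ x) = c 2 := by rw [hx, hsB, T3, T2, hc2, hv]
  have E6 : x ⬝ᵥ y = c 2 := by rw [hx, hy, hsB, T2, hc2]
  have E7 : x ⬝ᵥ (A *ᵥ y) = c 3 := by rw [hx, hy, hsB, T3, T2, hc3]
  have E8 : y ⬝ᵥ y = c 3 := by rw [hy, hsB, T2, E2]
  have E9 : y ⬝ᵥ (A *ᵥ y) = c 4 := by rw [hy, hsB, T3, T2, hc4e]
  -- nonvanishing of v
  have hvne : v ≠ 0 := by
    intro h
    exact hpar ⟨0, by simp [h]⟩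
  have hdot : ∀ z : Fin n → ℝ, z ≠ 0 → 0 < z ⬝ᵥ z := by
    intro z hz
    have := (dotProduct_self_star_pos_iff (v := z)).mpr hz
    rwa [hstar] at this
  -- positivity of moments
  have hp0 : 0 < c 0 := by rw [hc0]; exact hdot g hg
  have hp1 : 0 < c 1 := by rw [hc1, hv]; exact hApos g hg
  have hp2 : 0 < c 2 := by rw [← E1]; exact hdot v hvne
  have hp3 : 0 < c 3 := by rw [← E2]; exact hApos v hvne
  -- Cauchy-Schwarz inequalities
  have hAnn : ∀ z : Fin n → ℝ, 0 ≤ z ⬝ᵥ (A *ᵥ z) := by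
    intro z
    rcases eq_or_ne z 0 with rfl | hz
    · simp
    · exact (hApos z hz).le
  have hcs1 : c 1 ^ 2 ≤ c 0 * c 2 := by
    have h := cs_aux (M := (1 : Matrix (Fin n) (Fin n) ℝ)) transpose_one
      (fun z => by
        rw [one_mulVec]
        rcases eq_or_ne z 0 with rfl | hz
        · simp
        · exact (hdot z hz).le) g v
    simpa only [one_mulVec, ← hc1, ← hc0, E1] using h
  have hcs2 : c 2 ^ 2 ≤ c 1 * c 3 := by
    have h := cs_aux hAsym hAnn g v
    rw [← hc2, E2] at h
    have hgg : g ⬝ᵥ (A *ᵥ g) = c 1 := by rw [hc1, hv]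
    rwa [hgg] at h
  have hcs3 : c 3 ^ 2 < c 2 * c 4 := by
    set w : Fin n → ℝ := c 2 • (A *ᵥ v) - c 3 • v with hw
    have hwne : w ≠ 0 := by
      intro h
      rw [hw, sub_eq_zero] at h
      have hz : A *ᵥ (c 2 • v - c 3 • g) = 0 := by
        rw [mulVec_sub, mulVec_smul, mulVec_smul, ← hv, ← h]
        abel
      have hz2 := hAinj _ hz
      rw [sub_eq_zero] at hz2
      refine hpar ⟨c 3 / c 2, funext fun i => ?_⟩
      have hi := congrFun hz2 i
      simp only [Pi.smul_apply, smul_eq_mul] at hi ⊢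
      field_simp [hp2.ne']
      linarith [hi]
    have hwpos : 0 < w ⬝ᵥ w := by
      have := hdot w hwne
      exact this
    have hvAv : (A *ᵥ v) ⬝ᵥ v = c 3 := by rw [hsA, E2]
    have hww : w ⬝ᵥ w = c 2 * (c 2 * c 4 - c 3 ^ 2) := by
      rw [hw]
      simp only [dotProduct_sub, sub_dotProduct, dotProduct_smul, smul_dotProduct,
        smul_eq_mul, E3, E2, E1, hvAv]
      ring
    nlinarith [hwpos, hww, hp2]
  have hp4 : 0 < c 4 := by nlinarith [hcs3, hp2, hp3, sq_nonneg (c 3)]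
  -- the matrix lamn - A
  set M1 : Matrix (Fin n) (Fin n) ℝ := lamn • (1 : Matrix (Fin n) (Fin n) ℝ) - A with hM1
  have hM1sym : M1ᵀ = M1 := by
    rw [hM1, transpose_sub, transpose_smul, transpose_one, hAsym]
  have hM1eval : ∀ a b : Fin n → ℝ,
      a ⬝ᵥ (M1 *ᵥ b) = lamn * (a ⬝ᵥ b) - a ⬝ᵥ (A *ᵥ b) := by
    intro a b
    rw [hM1, sub_mulVec, smul_mulVec, one_mulVec, dotProduct_sub, dotProduct_smul,
      smul_eq_mul]
  have hM1pos : ∀ z : Fin n → ℝ, 0 ≤ z ⬝ᵥ (M1 *ᵥ z) := by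
    intro z
    rw [hM1eval]
    have := (hbound z).2
    linarith
  have he0 : 0 ≤ lamn * c 0 - c 1 := by
    have h := hM1pos g
    rwa [hM1eval, ← hc0, ← hv, ← hc1] at h
  have he1 : 0 ≤ lamn * c 1 - c 2 := by
    have h := hM1pos x
    rwa [hM1eval, E4, E5] at h
  have he2 : 0 ≤ lamn * c 2 - c 3 := by
    have h := hM1pos v
    rwa [hM1eval, E1, E2] at h
  have he3 : 0 ≤ lamn * c 3 - c 4 := by
    have h := hM1pos y
    rwa [hM1eval, E8, E9] at h
  have hcsA : (lamn * c 1 - c 2) ^ 2 ≤ (lamn * c 0 - c 1) * (lamn * c 2 - c 3) := by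
    have h := cs_aux hM1sym hM1pos g v
    rw [hM1eval, hM1eval, hM1eval, ← hc1, ← hc2, ← hc0, E1, E2] at h
    exact h
  have hcsB : (lamn * c 2 - c 3) ^ 2 ≤ (lamn * c 1 - c 2) * (lamn * c 3 - c 4) := by
    have h := cs_aux hM1sym hM1pos x y
    rwa [hM1eval, hM1eval, hM1eval, E4, E5, E6, E7, E8, E9] at h
  have he2strict : 0 < lamn * c 2 - c 3 := by
    rcases he2.lt_or_eq with h | h
    · exact h
    · exfalso
      have hvM : v ⬝ᵥ (M1 *ᵥ v) = 0 := by rw [hM1eval, E1, E2]; linarith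
      have hker := ker_aux hM1sym hM1pos v hvM
      rw [hM1, sub_mulVec, smul_mulVec, one_mulVec, sub_eq_zero] at hker
      have hz : A *ᵥ (v - lamn • g) = 0 := by
        rw [mulVec_sub, mulVec_smul, ← hv, ← hker]
        abel
      have hz2 := hAinj _ hz
      rw [sub_eq_zero] at hz2
      exact hpar ⟨lamn, hz2⟩
  have hlow : lam1 * c 2 ≤ c 3 := by
    have h := (hbound v).1
    rwa [E1, E2] at h
  have hlamn : 0 < lamn := by
    have h := (hbound g).2
    rw [← hc0] at h
    have hgg : g ⬝ᵥ (A *ᵥ g) = c 1 := by rw [hc1, hv]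
    rw [hgg] at h
    nlinarith [hp0, hp1, hlam1, (hbound g).1]
  -- positivity of the phis
  have hφ1 : 0 < φ₁ := by
    rw [h1]
    linarith [chain_lt (c 1) (c 2) (c 3) (c 4) hp2 hp3 hcs2 hcs3]
  have hφ3 : 0 ≤ φ₃ := by
    rw [h3]
    linarith [chain_le (c 0) (c 1) (c 2) (c 3) hp1 hp2 hcs1 hcs2]
  -- key quadratic inequalities
  have hqstar : φ₁ * c 2 ^ 2 - φ₂ * (c 2 * c 3) + φ₃ * c 3 ^ 2 ≤ 0 := by
    have hid : φ₁ * c 2 ^ 2 - φ₂ * (c 2 * c 3) + φ₃ * c 3 ^ 2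
        = φ₃ * (c 3 ^ 2 - c 2 * c 4) := by rw [h1, h2, h3]; ring
    rw [hid]
    have : c 3 ^ 2 - c 2 * c 4 ≤ 0 := by linarith [hcs3]
    exact mul_nonpos_of_nonneg_of_nonpos hφ3 this
  have hQ : 0 ≤ φ₁ - φ₂ * lamn + φ₃ * lamn ^ 2 := by
    have hQid : φ₁ - φ₂ * lamn + φ₃ * lamn ^ 2
        = (lamn * c 0 - c 1) * (lamn * c 3 - c 4)
          - (lamn * c 1 - c 2) * (lamn * c 2 - c 3) := by rw [h1, h2, h3]; ring
    rw [hQid]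
    linarith [e_ineq _ _ _ _ he0 he1 he2 he3 hcsA hcsB]
  exact endgame lam1 lamn (c 2) (c 3) φ₁ φ₂ φ₃ hlam1 hlamn hp2 hp3 hφ1 hqstar hQ
    he2strict hlow
end

section
/- Let f₁(α) = (gᵀ(I−αA)²g)/(gᵀ(I−αA)A(I−αA)g) for a symmetric positive definite A and g ≠ 0 not parallel to Ag. The two critical points β̃ ≤ β̂ of f₁ are the roots of φ₄β² − φ₃β + φ₅ = 0 where φ₃ = c₀c₃ − c₁c₂, φ₄ = c₁c₃ − c₂², φ₅ = c₀c₂ − c₁², and they satisfy the fixed-point-like identity β̂ = f₁(β̃). -/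
open Matrix

theorem beta_hat_eq_f1_beta_tilde
    {n : ℕ} (A : Matrix (Fin n) (Fin n) ℝ) (g : Fin n → ℝ)
    (hA : A.PosDef) (hg : g ≠ 0)
    (hpar : ¬ ∃ t : ℝ, A.mulVec g = t • g)
    (c : ℕ → ℝ) (hc : ∀ j, c j = g ⬝ᵥ (A ^ j).mulVec g)
    (φ₃ φ₄ φ₅ : ℝ)
    (h3 : φ₃ = c 0 * c 3 - c 1 * c 2)
    (h4 : φ₄ = c 1 * c 3 - c 2 ^ 2)
    (h5 : φ₅ = c 0 * c 2 - c 1 ^ 2)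
    (βt βh : ℝ)
    (hβt : βt = (φ₃ - Real.sqrt (φ₃ ^ 2 - 4 * φ₄ * φ₅)) / (2 * φ₄))
    (hβh : βh = (φ₃ + Real.sqrt (φ₃ ^ 2 - 4 * φ₄ * φ₅)) / (2 * φ₄)) :
    (φ₄ * βt ^ 2 - φ₃ * βt + φ₅ = 0) ∧
    (φ₄ * βh ^ 2 - φ₃ * βh + φ₅ = 0) ∧
    βh = (g ⬝ᵥ ((1 - βt • A) * (1 - βt • A)).mulVec g) /
          (g ⬝ᵥ ((1 - βt • A) * A * (1 - βt • A)).mulVec g) := by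
  -- symmetry of A
  have hAt : Aᵀ = A := hA.1
  have hsymm : ∀ v w : Fin n → ℝ, A.mulVec v ⬝ᵥ w = v ⬝ᵥ A.mulVec w := by
    intro v w
    rw [← hAt, mulVec_transpose, hAt, ← dotProduct_mulVec]
  have hpos : ∀ v : Fin n → ℝ, v ≠ 0 → 0 < v ⬝ᵥ A.mulVec v := by
    intro v hv
    simpa using hA.dotProduct_mulVec_pos hv
  have hdotpos : ∀ v : Fin n → ℝ, v ≠ 0 → 0 < v ⬝ᵥ v := by
    intro v hv
    have h1 : 0 ≤ v ⬝ᵥ v := Finset.sum_nonneg fun i _ => mul_self_nonneg (v i)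
    exact lt_of_le_of_ne h1 fun h => hv (dotProduct_self_eq_zero.mp h.symm)
  -- values of c
  have hc0 : c 0 = g ⬝ᵥ g := by simp [hc]
  have hc1 : c 1 = g ⬝ᵥ A.mulVec g := by simp [hc]
  have hc2 : c 2 = g ⬝ᵥ A.mulVec (A.mulVec g) := by
    rw [hc, pow_two, ← mulVec_mulVec]
  have hc3 : c 3 = g ⬝ᵥ A.mulVec (A.mulVec (A.mulVec g)) := by
    rw [hc, pow_succ, pow_two, ← mulVec_mulVec, ← mulVec_mulVec]
  -- basic positivity
  have hc0pos : 0 < c 0 := by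
    rw [hc0]; exact hdotpos g hg
  have hc1pos : 0 < c 1 := by rw [hc1]; exact hpos g hg
  -- φ₅ > 0
  have hφ5 : 0 < φ₅ := by
    set u : Fin n → ℝ := c 0 • A.mulVec g - c 1 • g with hu
    have hune : u ≠ 0 := by
      intro h
      apply hpar
      refine ⟨c 1 / c 0, ?_⟩
      have h' : c 0 • A.mulVec g = c 1 • g := sub_eq_zero.mp h
      have : (c 0)⁻¹ • (c 0 • A.mulVec g) = (c 0)⁻¹ • (c 1 • g) := by rw [h']
      rw [smul_smul, smul_smul, inv_mul_cancel₀ hc0pos.ne', one_smul] at this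
      rw [this, div_eq_inv_mul]
    have hupos : 0 < u ⬝ᵥ u := hdotpos u hune
    have hexp : u ⬝ᵥ u = c 0 * (c 0 * c 2 - c 1 ^ 2) := by
      rw [hu]
      simp only [sub_dotProduct, dotProduct_sub, smul_dotProduct, dotProduct_smul,
        smul_eq_mul, hsymm]
      rw [← hc0, ← hc1, ← hc2]
      ring
    rw [hexp] at hupos
    rw [h5]
    nlinarith [hc0pos]
  -- φ₄ > 0
  have hφ4 : 0 < φ₄ := by
    set u : Fin n → ℝ := c 1 • A.mulVec g - c 2 • g with hu
    have hune : u ≠ 0 := by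
      intro h
      apply hpar
      refine ⟨c 2 / c 1, ?_⟩
      have h' : c 1 • A.mulVec g = c 2 • g := sub_eq_zero.mp h
      have : (c 1)⁻¹ • (c 1 • A.mulVec g) = (c 1)⁻¹ • (c 2 • g) := by rw [h']
      rw [smul_smul, smul_smul, inv_mul_cancel₀ hc1pos.ne', one_smul] at this
      rw [this, div_eq_inv_mul]
    have hupos : 0 < u ⬝ᵥ A.mulVec u := hpos u hune
    have hexp : u ⬝ᵥ A.mulVec u = c 1 * (c 1 * c 3 - c 2 ^ 2) := by
      rw [hu]
      simp only [mulVec_sub, mulVec_smul, sub_dotProduct, dotProduct_sub,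
        smul_dotProduct, dotProduct_smul, smul_eq_mul, hsymm]
      rw [← hc1, ← hc2, ← hc3]
      ring
    rw [hexp] at hupos
    rw [h4]
    nlinarith [hc1pos]
  have hφ4ne : φ₄ ≠ 0 := hφ4.ne'
  -- discriminant positive
  have hid : (c 1) ^ 2 * (φ₃ ^ 2 - 4 * φ₄ * φ₅) =
      (2 * φ₄ * c 0 - φ₃ * c 1) ^ 2 + 4 * φ₄ * φ₅ ^ 2 := by
    rw [h3, h4, h5]; ring
  have hDisc : 0 < φ₃ ^ 2 - 4 * φ₄ * φ₅ := by
    have h1 : 0 < 4 * φ₄ * φ₅ ^ 2 := by positivity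
    nlinarith [sq_nonneg (2 * φ₄ * c 0 - φ₃ * c 1), mul_pos hc1pos hc1pos]
  set s := Real.sqrt (φ₃ ^ 2 - 4 * φ₄ * φ₅) with hsdef
  have hs2 : s ^ 2 = φ₃ ^ 2 - 4 * φ₄ * φ₅ := Real.sq_sqrt hDisc.le
  have h2t : 2 * φ₄ * βt = φ₃ - s := by
    rw [hβt]; field_simp
  have h2h : 2 * φ₄ * βh = φ₃ + s := by
    rw [hβh]; field_simp
  -- root equations
  have hroott : φ₄ * βt ^ 2 - φ₃ * βt + φ₅ = 0 := by
    have h4' : (4 : ℝ) * φ₄ * (φ₄ * βt ^ 2 - φ₃ * βt + φ₅) = 0 := by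
      linear_combination (2 * φ₄ * βt - φ₃ - s) * h2t + hs2
    rcases mul_eq_zero.mp h4' with h | h
    · exact absurd h (by positivity)
    · exact h
  have hrooth : φ₄ * βh ^ 2 - φ₃ * βh + φ₅ = 0 := by
    have h4' : (4 : ℝ) * φ₄ * (φ₄ * βh ^ 2 - φ₃ * βh + φ₅) = 0 := by
      linear_combination (2 * φ₄ * βh - φ₃ + s) * h2h + hs2
    rcases mul_eq_zero.mp h4' with h | h
    · exact absurd h (by positivity)
    · exact h
  have hVieta : φ₄ * (βt + βh) = φ₃ := by linear_combination (h2t + h2h) / 2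
  refine ⟨hroott, hrooth, ?_⟩
  -- expansions
  have hM : ∀ x : Fin n → ℝ, (1 - βt • A) *ᵥ x = x - βt • A *ᵥ x := by
    intro x
    rw [sub_mulVec, one_mulVec, smul_mulVec]
  have hN : g ⬝ᵥ ((1 - βt • A) * (1 - βt • A)).mulVec g
      = c 0 - 2 * βt * c 1 + βt ^ 2 * c 2 := by
    rw [← mulVec_mulVec, hM, hM]
    simp only [mulVec_sub, mulVec_smul, dotProduct_sub, dotProduct_smul,
      smul_eq_mul]
    rw [hc0, hc1, hc2]
    ring
  have hD : g ⬝ᵥ ((1 - βt • A) * A * (1 - βt • A)).mulVec g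
      = c 1 - 2 * βt * c 2 + βt ^ 2 * c 3 := by
    rw [← mulVec_mulVec, ← mulVec_mulVec, hM]
    simp only [mulVec_sub, mulVec_smul, dotProduct_sub, dotProduct_smul,
      smul_eq_mul, hM]
    rw [hc1, hc2, hc3]
    ring
  -- denominator positive
  have hwne : g - βt • A.mulVec g ≠ 0 := by
    intro h
    have h' : g = βt • A.mulVec g := by
      have := sub_eq_zero.mp h; exact this
    by_cases hb : βt = 0
    · exact hg (by rw [h', hb, zero_smul])
    · apply hpar
      refine ⟨βt⁻¹, ?_⟩
      have : βt⁻¹ • g = βt⁻¹ • (βt • A.mulVec g) := by rw [← h']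
      rw [smul_smul, inv_mul_cancel₀ hb, one_smul] at this
      rw [← this]
  have hDpos : 0 < c 1 - 2 * βt * c 2 + βt ^ 2 * c 3 := by
    have h0 := hpos _ hwne
    have hexp : (g - βt • A.mulVec g) ⬝ᵥ A.mulVec (g - βt • A.mulVec g)
        = c 1 - 2 * βt * c 2 + βt ^ 2 * c 3 := by
      simp only [mulVec_sub, mulVec_smul, sub_dotProduct, dotProduct_sub,
        smul_dotProduct, dotProduct_smul, smul_eq_mul, hsymm]
      rw [← hc1, ← hc2, ← hc3]
      ring
    rw [hexp] at h0
    exact h0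
  rw [hN, hD, eq_div_iff hDpos.ne']
  rw [h3, h4] at hVieta
  rw [h3, h4, h5] at hroott
  have hne : c 1 * c 3 - c 2 ^ 2 ≠ 0 := by rw [← h4]; exact hφ4ne
  apply mul_left_cancel₀ hne
  linear_combination (c 1 - 2 * βt * c 2 + βt ^ 2 * c 3) * hVieta +
    (c 2 - βt * c 3) * hroott
end

section
/- Let A be symmetric positive definite with eigenvalues in [λ₁, λ_n], and g ≠ 0 not parallel to Ag. Both roots of φ₄β² − φ₃β + φ₅ = 0 (with φ₃ = c₀c₃ − c₁c₂, φ₄ = c₁c₃ − c₂², φ₅ = c₀c₂ − c₁², c_j = gᵀA^j g) lie in the interval [1/λ_n, 1/λ₁]. -/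
open Matrix

theorem beta_roots_bounds
    {n : ℕ} (A : Matrix (Fin n) (Fin n) ℝ) (g : Fin n → ℝ)
    (hA : A.PosDef) (hg : g ≠ 0)
    (hpar : ¬ ∃ t : ℝ, A.mulVec g = t • g)
    (lam1 lamn : ℝ) (hlam1 : 0 < lam1)
    (hbound : ∀ v : Fin n → ℝ,
      lam1 * (v ⬝ᵥ v) ≤ v ⬝ᵥ A.mulVec v ∧ v ⬝ᵥ A.mulVec v ≤ lamn * (v ⬝ᵥ v))
    (c : ℕ → ℝ) (hc : ∀ j, c j = g ⬝ᵥ (A ^ j).mulVec g)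
    (φ₃ φ₄ φ₅ : ℝ)
    (h3 : φ₃ = c 0 * c 3 - c 1 * c 2)
    (h4 : φ₄ = c 1 * c 3 - c 2 ^ 2)
    (h5 : φ₅ = c 0 * c 2 - c 1 ^ 2) :
    ∀ β : ℝ, φ₄ * β ^ 2 - φ₃ * β + φ₅ = 0 →
      1 / lamn ≤ β ∧ β ≤ 1 / lam1 := by
  intro β hroot
  -- positivity of quadratic forms
  have hpd : ∀ v : Fin n → ℝ, v ≠ 0 → 0 < v ⬝ᵥ A.mulVec v := by
    intro v hv
    have := hA.dotProduct_mulVec_pos hv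
    simpa using this
  -- symmetry
  have ht : Aᵀ = A := hA.isHermitian
  have hsymm : ∀ x y : Fin n → ℝ, x ⬝ᵥ A.mulVec y = A.mulVec x ⬝ᵥ y := by
    intro x y
    rw [Matrix.dotProduct_mulVec, ← Matrix.mulVec_transpose, ht]
  -- moments
  have hc0 : c 0 = g ⬝ᵥ g := by rw [hc 0, pow_zero, Matrix.one_mulVec]
  have hc1 : c 1 = g ⬝ᵥ A.mulVec g := by rw [hc 1, pow_one]
  have hc2 : c 2 = g ⬝ᵥ A.mulVec (A.mulVec g) := by
    rw [hc 2, pow_two, ← Matrix.mulVec_mulVec]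
  have hc3 : c 3 = g ⬝ᵥ A.mulVec (A.mulVec (A.mulVec g)) := by
    rw [hc 3, pow_succ, pow_two, ← Matrix.mulVec_mulVec, ← Matrix.mulVec_mulVec]
  have e1 : A.mulVec g ⬝ᵥ A.mulVec g = c 2 := by
    rw [hc2]; exact (hsymm g (A.mulVec g)).symm
  have e2 : A.mulVec g ⬝ᵥ A.mulVec (A.mulVec g) = c 3 := by
    rw [hc3]; exact (hsymm g (A.mulVec (A.mulVec g))).symm
  have hc1pos : 0 < c 1 := by rw [hc1]; exact hpd g hg
  -- φ₄ > 0
  have hφ4 : 0 < φ₄ := by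
    set t : ℝ := c 2 / c 1 with htdef
    set w : Fin n → ℝ := A.mulVec g - t • g with hw
    have hw0 : w ≠ 0 := by
      intro h
      apply hpar
      exact ⟨t, by rwa [sub_eq_zero] at h⟩
    have hwpos : 0 < w ⬝ᵥ A.mulVec w := hpd w hw0
    have hwexp : w ⬝ᵥ A.mulVec w = c 3 - 2 * t * c 2 + t ^ 2 * c 1 := by
      rw [hw]
      simp only [Matrix.mulVec_sub, Matrix.mulVec_smul, sub_dotProduct,
        dotProduct_sub, smul_dotProduct, dotProduct_smul,
        smul_eq_mul]
      rw [e1, e2, ← hc1, ← hc2]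
      ring
    have h4' : φ₄ = c 1 * (c 3 - 2 * t * c 2 + t ^ 2 * c 1) := by
      rw [h4, htdef]
      field_simp
      ring
    rw [h4', ← hwexp]
    exact mul_pos hc1pos hwpos
  -- the other root
  set β' : ℝ := (φ₃ - φ₄ * β) / φ₄ with hβ'def
  have hH : φ₄ * β' = φ₃ - φ₄ * β := by
    rw [hβ'def]; field_simp
  set v : Fin n → ℝ := g - β' • A.mulVec g with hv
  have hv0 : v ≠ 0 := by
    intro h
    rw [hv, sub_eq_zero] at h
    rcases eq_or_ne β' 0 with h0 | h0
    · rw [h0, zero_smul] at h; exact hg h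
    · apply hpar
      exact ⟨β'⁻¹, (eq_inv_smul_iff₀ h0).mpr h.symm⟩
  have hvv : v ⬝ᵥ v = c 0 - 2 * β' * c 1 + β' ^ 2 * c 2 := by
    rw [hv]
    simp only [sub_dotProduct, dotProduct_sub,
      smul_dotProduct, dotProduct_smul, smul_eq_mul]
    rw [e1, dotProduct_comm (A.mulVec g) g, ← hc0, ← hc1]
    ring
  have hvAv : v ⬝ᵥ A.mulVec v = c 1 - 2 * β' * c 2 + β' ^ 2 * c 3 := by
    rw [hv]
    simp only [Matrix.mulVec_sub, Matrix.mulVec_smul, sub_dotProduct,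
      dotProduct_sub, smul_dotProduct, dotProduct_smul,
      smul_eq_mul, e1, e2]
    rw [← hc1, ← hc2]
    ring
  have hvApos : 0 < v ⬝ᵥ A.mulVec v := hpd v hv0
  -- the key identity: β = (v⬝v)/(v⬝Av)
  have hkey : β * (v ⬝ᵥ A.mulVec v) = v ⬝ᵥ v := by
    have h2 : φ₄ ^ 2 * (β * (v ⬝ᵥ A.mulVec v)) = φ₄ ^ 2 * (v ⬝ᵥ v) := by
      rw [hvv, hvAv, h3, h4, h5] at *
      linear_combination (c 3 * (c 1 * c 3 - c 2 ^ 2) * β + c 2 * (c 1 * c 3 - c 2 ^ 2)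
          - c 3 * (c 0 * c 3 - c 1 * c 2)) * hroot
        + (-2 * c 2 * β * (c 1 * c 3 - c 2 ^ 2)
          + β * c 3 * ((c 1 * c 3 - c 2 ^ 2) * β' + (c 0 * c 3 - c 1 * c 2) - (c 1 * c 3 - c 2 ^ 2) * β)
          + 2 * c 1 * (c 1 * c 3 - c 2 ^ 2)
          - c 2 * ((c 1 * c 3 - c 2 ^ 2) * β' + (c 0 * c 3 - c 1 * c 2) - (c 1 * c 3 - c 2 ^ 2) * β)) * hH
    exact mul_left_cancel₀ (pow_ne_zero 2 (ne_of_gt hφ4)) h2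
  have hnn : ∀ w : Fin n → ℝ, 0 ≤ w ⬝ᵥ w := fun w =>
    Finset.sum_nonneg fun i _ => mul_self_nonneg _
  have hlamn : 0 < lamn := by
    nlinarith [(hbound g).2, hpd g hg, hnn g]
  constructor
  · rw [div_le_iff₀ hlamn]
    nlinarith [(hbound v).2, hvApos, hkey]
  · rw [le_div_iff₀ hlam1]
    nlinarith [(hbound v).1, hvApos, hkey]
end
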